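/- (McGarvey's theorem) For every asymmetric binary relation R (tournament) on a finite set of m alternatives, there exists an odd number n of voters with linear-order preferences on the alternatives such that for every pair (x,y), a strict majority of voters prefer x to y if and only if x R y. -/

import Mathlib

open Set

/-- A strict linear (total) order on the alternatives, used as an individual
preference relation. -/
def IsPref {m : ℕ} (r : Fin m → Fin m → Prop) : Prop :=
  (∀ x y, x ≠ y → (r x y ∨ r y x)) ∧ (∀ x y, r x y → ¬ r y x) ∧
    (∀ x, ¬ r x x) ∧ (∀ x y z, r x y → r y z → r x z)

/-- Order on `Fin m` induced by an integer-valued key function. -/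
def kOrd {m : ℕ} (k : Fin m → ℤ) (x y : Fin m) : Prop := k x < k y

lemma isPref_kOrd {m : ℕ} (k : Fin m → ℤ) (hk : Function.Injective k) :
    IsPref (kOrd k) :=
  ⟨fun x y hxy => (lt_or_gt_of_ne fun h => hxy (hk h)).imp id id,
   fun _ _ h => not_lt_of_gt h, fun _ => lt_irrefl _,
   fun _ _ _ => lt_trans⟩

def keyA {m : ℕ} (a b : Fin m) (x : Fin m) : ℤ :=
  if x = a then -2 else if x = b then -1 else (x.val : ℤ)

def keyB {m : ℕ} (a b : Fin m) (x : Fin m) : ℤ :=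
  if x = a then 1 else if x = b then 2 else -(x.val : ℤ)

lemma keyA_inj {m : ℕ} {a b : Fin m} (hab : a ≠ b) : Function.Injective (keyA a b) := by
  intro x y h
  unfold keyA at h
  rcases eq_or_ne x a with hxa | hxa <;> rcases eq_or_ne y a with hya | hya <;>
    rcases eq_or_ne x b with hxb | hxb <;> rcases eq_or_ne y b with hyb | hyb <;>
    first
      | (exact hxa.trans hya.symm)
      | (exact hxb.trans hyb.symm)
      | (exact absurd (hxa.symm.trans hyb) hab.symm)
      | (exact absurd (hxb.symm.trans hya) hab)
      | (simp [hxa, hya, hxb, hyb, hab, hab.symm] at h; try omega)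

lemma keyB_inj {m : ℕ} {a b : Fin m} (hab : a ≠ b) : Function.Injective (keyB a b) := by
  intro x y h
  unfold keyB at h
  rcases eq_or_ne x a with hxa | hxa <;> rcases eq_or_ne y a with hya | hya <;>
    rcases eq_or_ne x b with hxb | hxb <;> rcases eq_or_ne y b with hyb | hyb <;>
    first
      | (exact hxa.trans hya.symm)
      | (exact hxb.trans hyb.symm)
      | (exact absurd (hxa.symm.trans hyb) hab.symm)
      | (exact absurd (hxb.symm.trans hya) hab)
      | (simp [hxa, hya, hxb, hyb, hab, hab.symm] at h; try omega)

open Classical in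
lemma gadget_count {m : ℕ} {a b x y : Fin m} (hab : a ≠ b) (hxy : x ≠ y) :
    ((if kOrd (keyA a b) x y then 1 else 0) + (if kOrd (keyB a b) x y then 1 else 0) : ℕ)
      = if x = a ∧ y = b then 2 else if x = b ∧ y = a then 0 else 1 := by
  have hv : x.val ≠ y.val := fun h => hxy (Fin.ext h)
  unfold kOrd keyA keyB
  rcases eq_or_ne x a with hxa | hxa <;> rcases eq_or_ne y b with hyb | hyb <;>
    rcases eq_or_ne x b with hxb | hxb <;> rcases eq_or_ne y a with hya | hya <;>
    simp_all <;> split_ifs <;> omega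

/-- The profile of voters: a base voter plus, for each pair in `S`, a gadget
pair of voters. -/
def voters {m : ℕ} (S : Finset (Fin m × Fin m)) :
    Option (↥S × Bool) → (Fin m → Fin m → Prop)
  | none => kOrd (fun x => (x.val : ℤ))
  | some (p, false) => kOrd (keyA (p.1).2 (p.1).1)
  | some (p, true) => kOrd (keyB (p.1).2 (p.1).1)

/-- McGarvey's theorem: every tournament (asymmetric, total on distinct pairs)
on `m` alternatives is the strict pairwise majority relation of some profile of
linear orders for an odd number of voters. -/
theorem stmt_17 (m : ℕ) (R : Fin m → Fin m → Prop)
    (hasym : ∀ x y, R x y → ¬ R y x)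
    (htotal : ∀ x y, x ≠ y → (R x y ∨ R y x)) :
    ∃ n : ℕ, Odd n ∧ ∃ π : Fin n → (Fin m → Fin m → Prop),
      (∀ i, IsPref (π i)) ∧
      ∀ x y, (n < 2 * {i : Fin n | π i x y}.ncard ↔ R x y) := by
  classical
  set S : Finset (Fin m × Fin m) :=
    Finset.univ.filter (fun p => p.1 < p.2 ∧ R p.2 p.1) with hS
  have hmemS : ∀ p : Fin m × Fin m, p ∈ S ↔ p.1 < p.2 ∧ R p.2 p.1 := by
    intro p; simp [hS]
  set D := S.card with hD
  have hne : ∀ p : ↥S, (p.1).2 ≠ (p.1).1 := by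
    intro p
    have := (hmemS p.1).1 p.2
    exact Fin.ne_of_gt this.1
  have hcardJ : Fintype.card (Option (↥S × Bool)) = 2 * D + 1 := by
    simp [Fintype.card_option, Fintype.card_prod, hD, mul_comm]
  let e : Fin (2 * D + 1) ≃ Option (↥S × Bool) := (Fintype.equivFinOfCardEq hcardJ).symm
  refine ⟨2 * D + 1, ⟨D, by ring⟩, fun i => voters S (e i), ?_, ?_⟩
  · intro i
    show IsPref (voters S (e i))
    rcases e i with _ | ⟨p, _ | _⟩
    · exact isPref_kOrd _ (fun x y h => Fin.ext (by exact_mod_cast h))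
    · exact isPref_kOrd _ (keyA_inj (hne p))
    · exact isPref_kOrd _ (keyB_inj (hne p))
  · intro x y
    have hset : {i : Fin (2 * D + 1) | voters S (e i) x y}
        = e.symm '' {j | voters S j x y} := by
      ext i
      simp only [Set.mem_image, Set.mem_setOf_eq]
      constructor
      · intro h; exact ⟨e i, h, by simp⟩
      · rintro ⟨j, hj, rfl⟩; simpa using hj
    have hcount : {i : Fin (2 * D + 1) | voters S (e i) x y}.ncard
        = ∑ j : Option (↥S × Bool), (if voters S j x y then 1 else 0) := by
      rw [hset, Set.ncard_image_of_injective _ e.symm.injective,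
        Set.ncard_eq_toFinset_card']
      rw [show {j : Option (↥S × Bool) | voters S j x y}.toFinset
          = Finset.univ.filter (fun j => voters S j x y) from Set.toFinset_setOf _,
        Finset.card_filter]
    rw [hcount]
    rcases eq_or_ne x y with rfl | hxy
    · -- diagonal: nobody prefers x to x
      have : ∀ j : Option (↥S × Bool), ¬ voters S j x x := by
        rintro (_ | ⟨p, _ | _⟩) h <;> exact lt_irrefl _ h
      simp only [this, if_false]
      simp only [Finset.sum_const_zero]
      constructor
      · omega
      · intro h; exact absurd h (hasym x x h)
    · -- off-diagonal
      have hsum : ∑ j : Option (↥S × Bool), (if voters S j x y then (1:ℕ) else 0)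
          = (if (x : Fin m) < y then 1 else 0)
            + ∑ p ∈ S, (if x = p.2 ∧ y = p.1 then 2 else if x = p.1 ∧ y = p.2 then 0 else 1) := by
        rw [Fintype.sum_option]
        congr 1
        · show (if kOrd (fun z : Fin m => (z.val : ℤ)) x y then (1:ℕ) else 0) = _
          by_cases h : (x : Fin m) < y
          · rw [if_pos h, if_pos (show kOrd (fun z : Fin m => (z.val : ℤ)) x y by
              simpa [kOrd] using (Fin.lt_def.1 h))]
          · rw [if_neg h, if_neg (fun hk => h (Fin.lt_def.2 (by
              have : ((x.val : ℤ)) < (y.val : ℤ) := hk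
              exact_mod_cast this)))]
        · rw [Fintype.sum_prod_type]
          rw [← Finset.sum_coe_sort S
            (fun p => if x = p.2 ∧ y = p.1 then 2 else if x = p.1 ∧ y = p.2 then 0 else 1)]
          refine Finset.sum_congr rfl ?_
          intro p _
          rw [show ∑ b : Bool, (if voters S (some (p, b)) x y then (1:ℕ) else 0)
              = (if voters S (some (p, false)) x y then 1 else 0)
                + (if voters S (some (p, true)) x y then 1 else 0) by
            rw [Fintype.sum_bool]; ring]
          have := gadget_count (a := (p.1).2) (b := (p.1).1) (hne p) hxy
          simp only [voters]; convert this using 2 <;> exact if_congr Iff.rfl rfl rfl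
      rw [hsum]
      -- now case analysis on membership
      by_cases h1 : (y, x) ∈ S
      · have hR : R x y := ((hmemS _).1 h1).2
        have hyx : y < x := ((hmemS _).1 h1).1
        have hsum2 : ∑ p ∈ S, (if x = p.2 ∧ y = p.1 then (2:ℕ)
            else if x = p.1 ∧ y = p.2 then 0 else 1) = 2 + (D - 1) := by
          rw [← Finset.add_sum_erase _ _ h1]
          congr 1
          · simp
          · rw [Finset.sum_congr rfl (g := fun _ => (1:ℕ)) ?_, Finset.sum_const,
              Finset.card_erase_of_mem h1, smul_eq_mul, mul_one]
            intro p hp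
            have hpne : p ≠ (y, x) := Finset.ne_of_mem_erase hp
            have hpS := Finset.mem_of_mem_erase hp
            have hplt := ((hmemS p).1 hpS).1
            rw [if_neg, if_neg]
            · rintro ⟨rfl, rfl⟩
              exact absurd hplt (not_lt.2 (le_of_lt hyx))
            · rintro ⟨h2, h3⟩
              exact hpne (by rw [Prod.ext_iff]; exact ⟨h3.symm, h2.symm⟩)
        have hD1 : 1 ≤ D := Finset.card_pos.2 ⟨_, h1⟩
        rw [hsum2, if_neg (not_lt.2 (le_of_lt hyx))]
        constructor
        · intro _; exact hR
        · intro _; omega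
      · by_cases h2 : (x, y) ∈ S
        · have hRyx : R y x := ((hmemS _).1 h2).2
          have hxy' : x < y := ((hmemS _).1 h2).1
          have hsum2 : ∑ p ∈ S, (if x = p.2 ∧ y = p.1 then (2:ℕ)
              else if x = p.1 ∧ y = p.2 then 0 else 1) = 0 + (D - 1) := by
            rw [← Finset.add_sum_erase _ _ h2]
            congr 1
            · rw [if_neg, if_pos ⟨rfl, rfl⟩]
              rintro ⟨h3, _⟩
              exact hxy h3
            · rw [Finset.sum_congr rfl (g := fun _ => (1:ℕ)) ?_, Finset.sum_const,
                Finset.card_erase_of_mem h2, smul_eq_mul, mul_one]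
              intro p hp
              have hpne : p ≠ (x, y) := Finset.ne_of_mem_erase hp
              have hpS := Finset.mem_of_mem_erase hp
              have hplt := ((hmemS p).1 hpS).1
              rw [if_neg, if_neg]
              · rintro ⟨h3, h4⟩
                exact hpne (by rw [Prod.ext_iff]; exact ⟨h3.symm, h4.symm⟩)
              · rintro ⟨rfl, rfl⟩
                exact absurd hplt (not_lt.2 (le_of_lt hxy'))
          have hD1 : 1 ≤ D := Finset.card_pos.2 ⟨_, h2⟩
          rw [hsum2, if_pos hxy']
          constructor
          · intro h; omega
          · intro h; exact absurd hRyx (hasym _ _ h)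
        · -- neither pair is in S
          have hsum2 : ∑ p ∈ S, (if x = p.2 ∧ y = p.1 then (2:ℕ)
              else if x = p.1 ∧ y = p.2 then 0 else 1) = D := by
            rw [Finset.sum_congr rfl (g := fun _ => (1:ℕ)) ?_, Finset.sum_const,
              smul_eq_mul, mul_one]
            intro p hp
            rw [if_neg, if_neg]
            · rintro ⟨rfl, rfl⟩; exact h2 hp
            · rintro ⟨rfl, rfl⟩; exact h1 hp
          rw [hsum2]
          rcases lt_or_gt_of_ne hxy with hlt | hgt
          · have hR : R x y := by
              rcases htotal x y hxy with h | h
              · exact h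
              · exact absurd ((hmemS (x, y)).2 ⟨hlt, h⟩) h2
            rw [if_pos hlt]
            constructor
            · intro _; exact hR
            · intro _; omega
          · have hnR : ¬ R x y := fun h => h1 ((hmemS (y, x)).2 ⟨hgt, h⟩)
            rw [if_neg (not_lt.2 (le_of_lt hgt))]
            constructor
            · intro h; omega
            · intro h; exact absurd h hnR
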